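/- Let n, k, i be natural numbers with 1 ≤ i ≤ k and 2k ≤ n, let K denote the subtype {S : Finset (Fin n) // S.card = k}, and let M : Matrix K K ℝ be the disjointness matrix. Let x : Fin (2i) → Fin n be an injective function, and define e : K → ℝ by: e S = 0 if there exists j : Fin i such that the cardinality of S ∩ {x(2j), x(2j+1)} is not equal to 1, and otherwise e S = ∏_{j : Fin i} (−1)^(card(S ∩ {x(2j+1)})) (i.e., a factor of −1 for each j with x(2j+1) ∈ S). Then M.mulVec e = ((−1)^i · C(n−k−i, k−i)) • e. -/

import Mathlib

open Finset

def disjMatrix (n k : ℕ) :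
    Matrix {S : Finset (Fin n) // S.card = k} {S : Finset (Fin n) // S.card = k} ℝ :=
  Matrix.of fun S T => if Disjoint S.1 T.1 then 1 else 0

private lemma card_inter_singleton_ite {α : Type*} [DecidableEq α] (W : Finset α) (u : α) :
    (W ∩ {u}).card = if u ∈ W then 1 else 0 := by
  split_ifs with h
  · rw [Finset.inter_singleton_of_mem h, Finset.card_singleton]
  · rw [Finset.inter_singleton_of_notMem h, Finset.card_empty]

private lemma card_inter_pair {α : Type*} [DecidableEq α] (W : Finset α) {u v : α} (huv : u ≠ v) :
    (W ∩ {u, v}).card = (W ∩ {u}).card + (W ∩ {v}).card := by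
  have : ({u, v} : Finset α) = {u} ∪ {v} := rfl
  rw [this, Finset.inter_union_distrib_left]
  rw [Finset.card_union_of_disjoint]
  exact Disjoint.mono (Finset.inter_subset_right) (Finset.inter_subset_right)
    (by simpa [Finset.disjoint_singleton] using huv)

theorem disjMatrix_mulVec_lovasz_eigenvector (n k i : ℕ)
    (hi : 1 ≤ i) (hik : i ≤ k) (hkn : 2 * k ≤ n)
    (x : Fin (2 * i) → Fin n) (hx : Function.Injective x)
    (e : {S : Finset (Fin n) // S.card = k} → ℝ)
    (he : ∀ S, e S =
      if ∃ j : Fin i,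
          (S.1 ∩ {x ⟨2 * j.val, by have := j.isLt; omega⟩,
                  x ⟨2 * j.val + 1, by have := j.isLt; omega⟩}).card ≠ 1
      then 0
      else ∏ j : Fin i,
        (-1 : ℝ) ^ (S.1 ∩ {x ⟨2 * j.val + 1, by have := j.isLt; omega⟩}).card) :
    (disjMatrix n k).mulVec e =
      ((-1 : ℝ) ^ i * ((n - k - i).choose (k - i) : ℝ)) • e := by
  classical
  have hlt0 : ∀ j : Fin i, 2 * j.val < 2 * i := fun j => by have := j.isLt; omega
  have hlt1 : ∀ j : Fin i, 2 * j.val + 1 < 2 * i := fun j => by have := j.isLt; omega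
  set a : Fin i → Fin n := fun j => x ⟨2 * j.val, hlt0 j⟩ with ha_def
  set b : Fin i → Fin n := fun j => x ⟨2 * j.val + 1, hlt1 j⟩ with hb_def
  have he' : ∀ S, e S = (if ∃ j : Fin i, ((S.1 ∩ {a j, b j}).card ≠ 1) then 0
      else ∏ j : Fin i, (-1 : ℝ) ^ (S.1 ∩ {b j}).card) := he
  -- distinctness
  have hab : ∀ j j' : Fin i, a j ≠ b j' := by
    intro j j' h
    have h2 := congrArg Fin.val (hx h)
    simp only [ha_def, hb_def] at h2
    omega
  have haa : ∀ j j' : Fin i, a j = a j' → j = j' := by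
    intro j j' h
    have h2 := congrArg Fin.val (hx h)
    simp only [ha_def] at h2
    exact Fin.ext (by omega)
  have hbb : ∀ j j' : Fin i, b j = b j' → j = j' := by
    intro j j' h
    have h2 := congrArg Fin.val (hx h)
    simp only [hb_def] at h2
    exact Fin.ext (by omega)
  set P : Fin i → Finset (Fin n) := fun j => {a j, b j} with hP_def
  have hPmem : ∀ (v : Fin n) (j : Fin i), v ∈ P j ↔ v = a j ∨ v = b j := by
    intro v j; simp [hP_def]
  have hPdisj : ∀ j j' : Fin i, j ≠ j' → Disjoint (P j) (P j') := by
    intro j j' hne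
    rw [Finset.disjoint_left]
    intro v hv hv'
    have h1 := (hPmem v j).1 hv
    have h2 := (hPmem v j').1 hv'
    rcases h1 with rfl | rfl <;> rcases h2 with h | h
    · exact hne (haa _ _ h)
    · exact hab _ _ h
    · exact hab _ _ h.symm
    · exact hne (hbb _ _ h)
  have hPcard : ∀ j, (P j).card = 2 := fun j => Finset.card_pair (hab j j)
  funext S
  have hmv : (disjMatrix n k).mulVec e S =
      ∑ T : {S : Finset (Fin n) // S.card = k}, if Disjoint S.1 T.1 then e T else 0 := by
    simp [Matrix.mulVec, disjMatrix, dotProduct, ite_mul, one_mul, zero_mul]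
  set pred : {S : Finset (Fin n) // S.card = k} → Prop :=
    fun T => Disjoint S.1 T.1 ∧ ∀ j : Fin i, (T.1 ∩ P j).card = 1 with hpred_def
  have hterm : ∀ T, (if Disjoint S.1 T.1 then e T else 0) =
      if pred T then ∏ j : Fin i, (-1 : ℝ) ^ (T.1 ∩ {b j}).card else 0 := by
    intro T
    by_cases hp : pred T
    · obtain ⟨h1, h2⟩ := hp
      rw [if_pos h1, he' T, if_pos (show pred T from ⟨h1, h2⟩), if_neg]
      push_neg
      intro j; exact h2 j
    · rw [if_neg hp]
      by_cases h1 : Disjoint S.1 T.1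
      · rw [if_pos h1, he' T, if_pos]
        have h2 : ¬ ∀ j : Fin i, (T.1 ∩ P j).card = 1 := fun h => hp ⟨h1, h⟩
        push_neg at h2
        exact h2
      · rw [if_neg h1]
  have hsum : (disjMatrix n k).mulVec e S =
      ∑ T ∈ Finset.univ.filter pred, ∏ j : Fin i, (-1 : ℝ) ^ (T.1 ∩ {b j}).card := by
    rw [hmv, Finset.sum_congr rfl (fun T _ => hterm T), Finset.sum_filter]
  rw [Pi.smul_apply, smul_eq_mul, hsum]
  by_cases hS : ∀ j : Fin i, (S.1 ∩ P j).card = 1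
  · -- Case B : S splits every pair
    have heS : e S = ∏ j : Fin i, (-1 : ℝ) ^ (S.1 ∩ {b j}).card := by
      rw [he' S, if_neg]
      push_neg
      intro j; exact hS j
    have hsplitS : ∀ j : Fin i, (a j ∈ S.1 ∧ b j ∉ S.1) ∨ (a j ∉ S.1 ∧ b j ∈ S.1) := by
      intro j
      have h1 := hS j
      rw [hP_def] at h1
      rw [card_inter_pair _ (hab j j), card_inter_singleton_ite,
        card_inter_singleton_ite] at h1
      by_cases ha : a j ∈ S.1 <;> by_cases hb : b j ∈ S.1 <;> simp [ha, hb] at h1 ⊢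
    set c : Fin i → Fin n := fun j => if a j ∈ S.1 then b j else a j with hc_def
    have hcP : ∀ j, c j ∈ P j := by
      intro j
      rw [hc_def]
      by_cases h : a j ∈ S.1 <;> simp only [h, if_pos, if_neg, if_true, if_false] <;>
        exact (hPmem _ _).2 (by tauto)
    have hcS : ∀ j, c j ∉ S.1 := by
      intro j
      rcases hsplitS j with ⟨h1, h2⟩ | ⟨h1, h2⟩
      · rw [hc_def]; simpa [h1] using h2
      · rw [hc_def]; simpa [h1] using h1
    have hcinj : Function.Injective c := by
      intro j j' h
      by_contra hne
      exact Finset.disjoint_left.1 (hPdisj j j' hne) (hcP j) (h ▸ hcP j')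
    set C : Finset (Fin n) := Finset.univ.image c with hC_def
    have hCcard : C.card = i := by
      rw [hC_def, Finset.card_image_of_injective _ hcinj, Finset.card_univ, Fintype.card_fin]
    set Pall : Finset (Fin n) := Finset.univ.biUnion P with hPall_def
    have hPallcard : Pall.card = 2 * i := by
      rw [hPall_def, Finset.card_biUnion (fun j _ j' _ h => hPdisj j j' h)]
      simp [hPcard, mul_comm]
    have hCPall : C ⊆ Pall := by
      intro v hv
      obtain ⟨j, _, rfl⟩ := Finset.mem_image.1 hv
      exact Finset.mem_biUnion.2 ⟨j, Finset.mem_univ j, hcP j⟩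
    have hSPall : (S.1 ∩ Pall).card = i := by
      have heq : S.1 ∩ Pall = Finset.univ.biUnion (fun j => S.1 ∩ P j) := by
        ext v
        simp only [Finset.mem_inter, hPall_def, Finset.mem_biUnion, Finset.mem_univ,
          true_and]
        tauto
      rw [heq, Finset.card_biUnion]
      · simp [hS]
      · intro j _ j' _ h
        exact Disjoint.mono Finset.inter_subset_right Finset.inter_subset_right (hPdisj j j' h)
    set U : Finset (Fin n) := (S.1 ∪ Pall)ᶜ with hU_def
    have hSPallcard : (S.1 ∪ Pall).card = k + i := by
      have h1 := Finset.card_union_add_card_inter S.1 Pall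
      rw [S.2, hPallcard, hSPall] at h1
      omega
    have hUcard : U.card = n - k - i := by
      rw [hU_def, Finset.card_compl, hSPallcard, Fintype.card_fin]
      omega
    -- structure of T in the filter
    have hTP : ∀ T ∈ Finset.univ.filter pred, ∀ j : Fin i, T.1 ∩ P j = {c j} := by
      intro T hT j
      obtain ⟨hD, hsp⟩ := (Finset.mem_filter.1 hT).2
      obtain ⟨t, ht⟩ := Finset.card_eq_one.1 (hsp j)
      rw [ht]
      have htm : t ∈ T.1 ∩ P j := ht ▸ Finset.mem_singleton_self t
      obtain ⟨htT, htP⟩ := Finset.mem_inter.1 htm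
      have htS : t ∉ S.1 := fun h => Finset.disjoint_left.1 hD h htT
      congr 1
      rcases (hPmem t j).1 htP with rfl | rfl
      · rcases hsplitS j with ⟨h1, _⟩ | ⟨h1, _⟩
        · exact absurd h1 htS
        · rw [hc_def]; simp [h1]
      · rcases hsplitS j with ⟨h1, _⟩ | ⟨_, h2⟩
        · rw [hc_def]; simp [h1]
        · exact absurd h2 htS
    have hCsubT : ∀ T ∈ Finset.univ.filter pred, C ⊆ T.1 := by
      intro T hT v hv
      obtain ⟨j, _, rfl⟩ := Finset.mem_image.1 hv
      have : c j ∈ T.1 ∩ P j := by rw [hTP T hT j]; exact Finset.mem_singleton_self _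
      exact (Finset.mem_inter.1 this).1
    -- every term of the sum is constant
    have hconst : ∀ T ∈ Finset.univ.filter pred,
        (∏ j : Fin i, (-1 : ℝ) ^ (T.1 ∩ {b j}).card) = (-1 : ℝ) ^ i * e S := by
      intro T hT
      obtain ⟨hD, hsp⟩ := (Finset.mem_filter.1 hT).2
      have hbT : ∀ j : Fin i, (b j ∈ T.1 ↔ a j ∈ S.1) := by
        intro j
        constructor
        · intro h
          have : b j ∈ T.1 ∩ P j := Finset.mem_inter.2 ⟨h, (hPmem _ _).2 (Or.inr rfl)⟩
          rw [hTP T hT j, Finset.mem_singleton] at this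
          rcases hsplitS j with ⟨h1, _⟩ | ⟨h1, h2⟩
          · exact h1
          · rw [hc_def] at this
            simp only [h1, if_neg, if_false] at this
            exact absurd this.symm (hab j j)
        · intro h
          have hc : c j = b j := by rw [hc_def]; simp [h]
          have : c j ∈ T.1 ∩ P j := by rw [hTP T hT j]; exact Finset.mem_singleton_self _
          rw [hc] at this
          exact (Finset.mem_inter.1 this).1
      have hfac : ∀ j : Fin i, (-1 : ℝ) ^ (T.1 ∩ {b j}).card =
          -1 * (-1 : ℝ) ^ (S.1 ∩ {b j}).card := by
        intro j
        rw [card_inter_singleton_ite, card_inter_singleton_ite]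
        rcases hsplitS j with ⟨h1, h2⟩ | ⟨h1, h2⟩
        · have : b j ∈ T.1 := (hbT j).2 h1
          simp [this, h2]
        · have : b j ∉ T.1 := fun h => h1 ((hbT j).1 h)
          simp [this, h2]
      rw [heS, Finset.prod_congr rfl (fun j _ => hfac j), Finset.prod_mul_distrib,
        Finset.prod_const, Finset.card_univ, Fintype.card_fin]
    -- cardinality of the filter
    have hfiltercard : (Finset.univ.filter pred).card = (n - k - i).choose (k - i) := by
      have hbij : (Finset.univ.filter pred).card = (U.powersetCard (k - i)).card := by
        refine Finset.card_bij' (fun T (hT : T ∈ Finset.univ.filter pred) => T.1 \ C)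
          (fun R hR => (⟨C ∪ R, by
            obtain ⟨hRU, hRcard⟩ := Finset.mem_powersetCard.1 hR
            have hdisj : Disjoint C R := by
              rw [Finset.disjoint_left]
              intro v hv hvR
              have h1 : v ∈ S.1 ∪ Pall := Finset.mem_union_right _ (hCPall hv)
              have h2 := hRU hvR
              rw [hU_def, Finset.mem_compl] at h2
              exact h2 h1
            rw [Finset.card_union_of_disjoint hdisj, hCcard, hRcard]
            omega⟩ : {S : Finset (Fin n) // S.card = k})) ?_ ?_ ?_ ?_
        · -- maps into powersetCard
          intro T hT
          rw [Finset.mem_powersetCard]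
          obtain ⟨hD, hsp⟩ := (Finset.mem_filter.1 hT).2
          constructor
          · intro v hv
            obtain ⟨hvT, hvC⟩ := Finset.mem_sdiff.1 hv
            rw [hU_def, Finset.mem_compl, Finset.mem_union]
            rintro (h | h)
            · exact Finset.disjoint_left.1 hD h hvT
            · rw [hPall_def] at h
              obtain ⟨j, _, hj⟩ := Finset.mem_biUnion.1 h
              have : v ∈ T.1 ∩ P j := Finset.mem_inter.2 ⟨hvT, hj⟩
              rw [hTP T hT j, Finset.mem_singleton] at this
              exact hvC (this ▸ Finset.mem_image.2 ⟨j, Finset.mem_univ j, rfl⟩)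
          · rw [Finset.card_sdiff_of_subset (hCsubT T hT), T.2, hCcard]
        · -- maps into the filter
          intro R hR
          obtain ⟨hRU, hRcard⟩ := Finset.mem_powersetCard.1 hR
          refine Finset.mem_filter.2 ⟨Finset.mem_univ _, ?_, ?_⟩
          · rw [Finset.disjoint_union_right]
            constructor
            · rw [Finset.disjoint_right]
              intro v hv
              obtain ⟨j, _, rfl⟩ := Finset.mem_image.1 hv
              exact hcS j
            · rw [Finset.disjoint_right]
              intro v hv hvS
              have h2 := hRU hv
              rw [hU_def, Finset.mem_compl] at h2
              exact h2 (Finset.mem_union_left _ hvS)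
          · intro j
            have hCP : C ∩ P j = {c j} := by
              ext v
              simp only [Finset.mem_inter, Finset.mem_singleton]
              constructor
              · rintro ⟨hv, hvP⟩
                obtain ⟨j', _, rfl⟩ := Finset.mem_image.1 hv
                by_contra hne
                have hjj : j' ≠ j := fun h => hne (by rw [h])
                exact Finset.disjoint_left.1 (hPdisj j' j hjj) (hcP j') hvP
              · rintro rfl
                exact ⟨Finset.mem_image.2 ⟨j, Finset.mem_univ j, rfl⟩, hcP j⟩
            have hRP : R ∩ P j = ∅ := by
              rw [Finset.eq_empty_iff_forall_notMem]
              intro v hv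
              obtain ⟨hvR, hvP⟩ := Finset.mem_inter.1 hv
              have h2 := hRU hvR
              rw [hU_def, Finset.mem_compl] at h2
              exact h2 (Finset.mem_union_right _
                (Finset.mem_biUnion.2 ⟨j, Finset.mem_univ j, hvP⟩))
            show ((C ∪ R) ∩ P j).card = 1
            rw [Finset.union_inter_distrib_right, hCP, hRP, Finset.union_empty,
              Finset.card_singleton]
        · -- left inverse
          intro T hT
          exact Subtype.ext (by
            show C ∪ (T.1 \ C) = T.1
            exact Finset.union_sdiff_of_subset (hCsubT T hT))
        · -- right inverse
          intro R hR
          show (C ∪ R) \ C = R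
          apply Finset.union_sdiff_cancel_left
          rw [Finset.disjoint_left]
          intro v hv hvR
          have h2 := (Finset.mem_powersetCard.1 hR).1 hvR
          rw [hU_def, Finset.mem_compl] at h2
          exact h2 (Finset.mem_union_right _ (hCPall hv))
      rw [hbij, Finset.card_powersetCard, hUcard]
    rw [Finset.sum_congr rfl hconst, Finset.sum_const, hfiltercard, nsmul_eq_mul]
    ring
  · -- case A : e S = 0, sum = 0
    push_neg at hS
    obtain ⟨j₀, hj₀⟩ := hS
    rw [he' S, if_pos ⟨j₀, hj₀⟩, mul_zero]
    have hle : (S.1 ∩ P j₀).card ≤ 2 := le_trans (Finset.card_le_card Finset.inter_subset_right)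
      (le_of_eq (hPcard j₀))
    rcases (show (S.1 ∩ P j₀).card = 0 ∨ (S.1 ∩ P j₀).card = 2 by omega) with h0 | h2
    · -- S misses the pair j₀ : involution argument
      have haS : a j₀ ∉ S.1 := by
        intro h
        have : a j₀ ∈ S.1 ∩ P j₀ := Finset.mem_inter.2 ⟨h, (hPmem _ _).2 (Or.inl rfl)⟩
        rw [Finset.card_eq_zero.1 h0] at this
        exact absurd this (Finset.notMem_empty _)
      have hbS : b j₀ ∉ S.1 := by
        intro h
        have : b j₀ ∈ S.1 ∩ P j₀ := Finset.mem_inter.2 ⟨h, (hPmem _ _).2 (Or.inr rfl)⟩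
        rw [Finset.card_eq_zero.1 h0] at this
        exact absurd this (Finset.notMem_empty _)
      set σ : Equiv.Perm (Fin n) := Equiv.swap (a j₀) (b j₀) with hσ_def
      have hmemσ : ∀ (T : Finset (Fin n)) (v : Fin n), v ∈ T.image σ ↔ σ v ∈ T := by
        intro T v
        constructor
        · intro h
          obtain ⟨t, ht, rfl⟩ := Finset.mem_image.1 h
          simpa [hσ_def, Equiv.swap_apply_self] using ht
        · intro h
          exact Finset.mem_image.2 ⟨σ v, h, by simp [hσ_def, Equiv.swap_apply_self]⟩
      have himg2 : ∀ T : Finset (Fin n), (T.image σ).image σ = T := by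
        intro T
        rw [Finset.image_image]
        have : (σ : Fin n → Fin n) ∘ σ = id := by
          funext v; simp [hσ_def, Equiv.swap_apply_self]
        rw [this, Finset.image_id]
      have hfix : ∀ v : Fin n, v ≠ a j₀ → v ≠ b j₀ → σ v = v := fun v h1 h2 =>
        Equiv.swap_apply_of_ne_of_ne h1 h2
      have hPfix : ∀ j : Fin i, j ≠ j₀ → ∀ v ∈ P j, σ v = v := by
        intro j hj v hv
        rcases (hPmem v j).1 hv with rfl | rfl
        · exact hfix _ (fun h => hj (haa _ _ h)) (hab _ _)
        · exact hfix _ (fun h => hab j₀ j h.symm) (fun h => hj (hbb _ _ h))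
      have hinter : ∀ (T : Finset (Fin n)) (j : Fin i), j ≠ j₀ → T.image σ ∩ P j = T ∩ P j := by
        intro T j hj
        ext v
        simp only [Finset.mem_inter, hmemσ]
        constructor
        · rintro ⟨h1, h2⟩
          rw [hPfix j hj v h2] at h1
          exact ⟨h1, h2⟩
        · rintro ⟨h1, h2⟩
          rw [hPfix j hj v h2]
          exact ⟨h1, h2⟩
      have hsingb : ∀ (T : Finset (Fin n)) (j : Fin i), j ≠ j₀ → T.image σ ∩ {b j} = T ∩ {b j} := by
        intro T j hj
        ext v
        simp only [Finset.mem_inter, hmemσ, Finset.mem_singleton]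
        constructor
        · rintro ⟨h1, rfl⟩
          rw [hPfix j hj _ ((hPmem _ _).2 (Or.inr rfl))] at h1
          exact ⟨h1, rfl⟩
        · rintro ⟨h1, rfl⟩
          rw [hPfix j hj _ ((hPmem _ _).2 (Or.inr rfl))]
          exact ⟨h1, rfl⟩
      have hamem : ∀ T : Finset (Fin n), (a j₀ ∈ T.image σ ↔ b j₀ ∈ T) := by
        intro T; rw [hmemσ, hσ_def, Equiv.swap_apply_left]
      have hbmem : ∀ T : Finset (Fin n), (b j₀ ∈ T.image σ ↔ a j₀ ∈ T) := by
        intro T; rw [hmemσ, hσ_def, Equiv.swap_apply_right]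
      have hj₀card : ∀ T : Finset (Fin n), (T.image σ ∩ P j₀).card = (T ∩ P j₀).card := by
        intro T
        rw [hP_def]
        rw [card_inter_pair _ (hab j₀ j₀), card_inter_pair _ (hab j₀ j₀),
          card_inter_singleton_ite, card_inter_singleton_ite, card_inter_singleton_ite,
          card_inter_singleton_ite]
        simp only [hamem, hbmem]
        by_cases h1 : a j₀ ∈ T <;> by_cases h2 : b j₀ ∈ T <;> simp [h1, h2]
      have hdisj1 : ∀ T : Finset (Fin n), Disjoint S.1 T → Disjoint S.1 (T.image σ) := by
        intro T hD
        rw [Finset.disjoint_right]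
        intro v hv hvS
        rw [hmemσ] at hv
        have hva : v ≠ a j₀ := fun h => haS (h ▸ hvS)
        have hvb : v ≠ b j₀ := fun h => hbS (h ▸ hvS)
        rw [hfix v hva hvb] at hv
        exact Finset.disjoint_right.1 hD hv hvS
      -- the involution
      refine Finset.sum_involution
        (fun (T : {S : Finset (Fin n) // S.card = k}) (_ : T ∈ Finset.univ.filter pred) =>
          (⟨T.1.image σ, by rw [Finset.card_image_of_injective _ σ.injective, T.2]⟩ :
            {S : Finset (Fin n) // S.card = k})) ?_ ?_ ?_ ?_
      · -- f T + f (g T) = 0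
        intro T hT
        obtain ⟨hD, hsp⟩ := (Finset.mem_filter.1 hT).2
        have hcard1 : (T.1 ∩ {a j₀}).card + (T.1 ∩ {b j₀}).card = 1 := by
          rw [← card_inter_pair _ (hab j₀ j₀)]
          exact hsp j₀
        have hfj₀ : ((-1 : ℝ)) ^ ((T.1.image σ ∩ {b j₀}).card) =
            -(-1 : ℝ) ^ ((T.1 ∩ {b j₀}).card) := by
          rw [card_inter_singleton_ite, card_inter_singleton_ite]
          rw [card_inter_singleton_ite, card_inter_singleton_ite] at hcard1
          simp only [hbmem]
          by_cases h1 : a j₀ ∈ T.1 <;> by_cases h2 : b j₀ ∈ T.1 <;>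
            simp [h1, h2] at hcard1 ⊢
        have hneg : (∏ j : Fin i, (-1 : ℝ) ^ ((T.1.image σ ∩ {b j}).card)) =
            -(∏ j : Fin i, (-1 : ℝ) ^ ((T.1 ∩ {b j}).card)) := by
          rw [← Finset.prod_erase_mul Finset.univ _ (Finset.mem_univ j₀),
            ← Finset.prod_erase_mul Finset.univ _ (Finset.mem_univ j₀)]
          rw [hfj₀]
          rw [Finset.prod_congr rfl (fun j hj => by
            rw [hsingb T.1 j (Finset.ne_of_mem_erase hj)])]
          ring
        exact (by rw [hneg]; ring)
      · -- g T ≠ T when f T ≠ 0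
        intro T hT _
        obtain ⟨hD, hsp⟩ := (Finset.mem_filter.1 hT).2
        have hcard1 : (T.1 ∩ {a j₀}).card + (T.1 ∩ {b j₀}).card = 1 := by
          rw [← card_inter_pair _ (hab j₀ j₀)]
          exact hsp j₀
        rw [card_inter_singleton_ite, card_inter_singleton_ite] at hcard1
        intro hEq
        have hEq' : T.1.image σ = T.1 := congrArg Subtype.val hEq
        have := hamem T.1
        rw [hEq'] at this
        by_cases h1 : a j₀ ∈ T.1 <;> by_cases h2 : b j₀ ∈ T.1 <;>
          simp [h1, h2] at hcard1 this
      · -- g T ∈ filter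
        intro T hT
        obtain ⟨hD, hsp⟩ := (Finset.mem_filter.1 hT).2
        refine Finset.mem_filter.2 ⟨Finset.mem_univ _, hdisj1 T.1 hD, fun j => ?_⟩
        by_cases hj : j = j₀
        · subst hj
          rw [hj₀card]
          exact hsp j
        · rw [hinter T.1 j hj]
          exact hsp j
      · -- involution
        intro T hT
        exact Subtype.ext (himg2 T.1)
    · -- P j₀ ⊆ S : every summand vanishes
      have hPS : P j₀ ⊆ S.1 := by
        have : S.1 ∩ P j₀ = P j₀ := Finset.eq_of_subset_of_card_le Finset.inter_subset_right
          (by rw [h2, hPcard])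
        rw [← this]
        exact Finset.inter_subset_left
      apply Finset.sum_eq_zero
      intro T hT
      obtain ⟨hD, hsp⟩ := (Finset.mem_filter.1 hT).2
      exfalso
      have h1 := hsp j₀
      have hpos : 0 < (T.1 ∩ P j₀).card := by omega
      obtain ⟨t, ht⟩ := Finset.card_pos.1 hpos
      have htT : t ∈ T.1 := (Finset.mem_inter.1 ht).1
      have htS : t ∈ S.1 := hPS (Finset.mem_inter.1 ht).2
      exact Finset.disjoint_left.1 hD htS htT
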